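/- Let (K,v) be a valued field of residue characteristic p, and let f(z) = z^d + a_{d−1}z^{d−1} + ⋯ + a₁z ∈ K[z] be a monic postcritically bounded polynomial of prime power degree d = p^ℓ ≥ 2 fixing 0. Then v(aᵢ) > 0 for all i = 1, …, d−1. In particular f has good reduction and its reduction is f̄(z) = z^d. -/

import Mathlib

open Polynomial




section helpers
variable {K : Type*} [Field K] (v : AddValuation K (WithTop ℝ))

lemma my_nsmul_coe (n : ℕ) (r : ℝ) : n • ((r : WithTop ℝ)) = (((n : ℝ) * r : ℝ) : WithTop ℝ) := by
  induction n with
  | zero => simp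
  | succ n ih =>
    rw [succ_nsmul, ih, ← WithTop.coe_add]
    congr 1
    push_cast
    ring

lemma my_val_prod (s : Multiset K) : v s.prod = (s.map v).sum := by
  induction s using Multiset.induction_on with
  | empty => simp [AddValuation.map_one]
  | cons a s ih => simp [AddValuation.map_mul, ih]

lemma my_exists_min (s : Multiset K) (hs : s ≠ 0) : ∃ a ∈ s, ∀ b ∈ s, v a ≤ v b := by
  induction s using Multiset.induction_on with
  | empty => exact absurd rfl hs
  | cons a s ih =>
    rcases eq_or_ne s 0 with rfl | h
    · exact ⟨a, Multiset.mem_cons_self a 0, by simp⟩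
    · obtain ⟨b, hb, hbmin⟩ := ih h
      rcases le_total (v a) (v b) with hab | hab
      · exact ⟨a, Multiset.mem_cons_self a s, by
          intro c hc
          rcases Multiset.mem_cons.1 hc with rfl | hc
          · exact le_rfl
          · exact hab.trans (hbmin c hc)⟩
      · exact ⟨b, Multiset.mem_cons_of_mem hb, by
          intro c hc
          rcases Multiset.mem_cons.1 hc with rfl | hc
          · exact hab
          · exact hbmin c hc⟩
end helpers



section helpers
variable {K : Type*} [Field K] (v : AddValuation K (WithTop ℝ))

lemma my_vnat (n : ℕ) : 0 ≤ v ((n : K)) := by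
  induction n with
  | zero => simp [AddValuation.map_zero]
  | succ n ih =>
    push_cast
    refine v.map_le_add ih ?_
    rw [AddValuation.map_one]

lemma my_vint (x : ℤ) : 0 ≤ v ((x : K)) := by
  rcases x.eq_nat_or_neg with ⟨n, rfl | rfl⟩
  · push_cast; exact my_vnat v n
  · push_cast [AddValuation.map_neg]; exact my_vnat v n

lemma my_vcop {p u : ℕ} (hu : Nat.Coprime u p) (hvp : 0 < v ((p : K))) : v ((u : K)) = 0 := by
  have h := Nat.isCoprime_iff_coprime.mpr hu
  obtain ⟨x, y, hxy⟩ := h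
  have hK : (x : K) * (u : K) + (y : K) * (p : K) = 1 := by
    have := congrArg (fun z : ℤ => (z : K)) hxy
    push_cast at this
    simpa using this
  by_contra h0
  have hu0 : 0 < v ((u : K)) := lt_of_le_of_ne (my_vnat v u) (Ne.symm h0)
  have h1 : (0 : WithTop ℝ) < v ((1 : K)) := by
    rw [← hK]
    refine v.map_lt_add ?_ ?_
    · rw [AddValuation.map_mul]
      exact lt_of_lt_of_le hu0 (le_add_of_nonneg_left (my_vint v x))
    · rw [AddValuation.map_mul]
      exact lt_of_lt_of_le hvp (le_add_of_nonneg_left (my_vint v y))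
  rw [AddValuation.map_one] at h1
  exact lt_irrefl _ h1

lemma my_vnat_lt {p ℓ j : ℕ} (hp : p.Prime) (hvp : 0 < v ((p : K)))
    (hvptop : v ((p : K)) ≠ ⊤) (hj : j ≠ 0) (hjlt : j < p ^ ℓ) :
    v ((j : K)) < ℓ • v ((p : K)) := by
  set a := j.factorization p with ha
  have hfac : p ^ a * (j / p ^ a) = j := Nat.ordProj_mul_ordCompl_eq_self j p
  have hcop : Nat.Coprime (j / p ^ a) p := (Nat.coprime_ordCompl hp hj).symm
  have haℓ : a < ℓ := by
    have h1 : p ^ a ≤ j := Nat.ordProj_le p hj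
    have : p ^ a < p ^ ℓ := lt_of_le_of_lt h1 hjlt
    exact (Nat.pow_lt_pow_iff_right hp.one_lt).mp this
  have hcast : (j : K) = (p : K) ^ a * ((j / p ^ a : ℕ) : K) := by
    rw [← hfac]; push_cast; ring_nf; rw [hfac]
  rw [hcast, AddValuation.map_mul, AddValuation.map_pow, my_vcop v hcop hvp, add_zero]
  obtain ⟨r, hr⟩ : ∃ r : ℝ, v ((p : K)) = (r : WithTop ℝ) := by
    cases hx : v ((p : K)) with
    | top => exact absurd hx hvptop
    | coe r => exact ⟨r, rfl⟩
  have hr0 : 0 < r := by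
    rw [hr] at hvp
    exact_mod_cast hvp
  rw [hr, my_nsmul_coe, my_nsmul_coe, WithTop.coe_lt_coe]
  have : (a : ℝ) < (ℓ : ℝ) := by exact_mod_cast haℓ
  nlinarith

end helpers

section helpers
variable {K : Type*} [Field K] (v : AddValuation K (WithTop ℝ))

lemma my_coeff_prod_ge (s : Multiset K) (m : WithTop ℝ) (hm : ∀ β ∈ s, m ≤ v β) (i : ℕ) :
    (Multiset.card s - i) • m ≤ v (((s.map fun β => X - C β).prod).coeff i) := by
  induction s using Multiset.induction_on generalizing i with
  | empty =>
    cases i with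
    | zero => simp [AddValuation.map_one]
    | succ i => simp [coeff_one, AddValuation.map_zero]
  | cons a s ih =>
    have ha : m ≤ v a := hm a (Multiset.mem_cons_self a s)
    have hm' : ∀ β ∈ s, m ≤ v β := fun β hβ => hm β (Multiset.mem_cons_of_mem hβ)
    rw [Multiset.map_cons, Multiset.prod_cons, mul_comm, Multiset.card_cons]
    cases i with
    | zero =>
      rw [mul_coeff_zero]
      have : (X - C a).coeff 0 = -a := by simp
      rw [this, AddValuation.map_mul, AddValuation.map_neg]
      calc (Multiset.card s + 1 - 0) • m = Multiset.card s • m + m := by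
            rw [Nat.sub_zero, succ_nsmul]
        _ ≤ _ := add_le_add (by simpa using ih hm' 0) ha
    | succ i =>
      rw [coeff_mul_X_sub_C]
      apply v.map_le_sub
      · rw [Nat.succ_sub_succ]
        exact ih hm' i
      · rw [Nat.succ_sub_succ]
        by_cases hik : i + 1 ≤ Multiset.card s
        · rw [AddValuation.map_mul]
          have h1 : (Multiset.card s - (i+1)) • m ≤ v ((Multiset.map (fun β => X - C β) s).prod.coeff (i+1)) := ih hm' (i+1)
          calc (Multiset.card s - i) • m = (Multiset.card s - (i+1)) • m + m := by
                rw [← succ_nsmul]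
                congr 1
                omega
            _ ≤ _ := add_le_add h1 ha
        · have hz : ((Multiset.map (fun β => X - C β) s).prod).coeff (i+1) = 0 := by
            apply coeff_eq_zero_of_natDegree_lt
            rw [natDegree_multiset_prod_X_sub_C_eq_card]
            omega
          rw [hz, zero_mul, AddValuation.map_zero]
          exact le_top
end helpers
section helpers2
open Polynomial
variable {K : Type*} [Field K] (v : AddValuation K (WithTop ℝ))

lemma my_L2 (s₁ s₂ : Multiset K) (r : ℝ)
    (h1 : ∀ β ∈ s₁, v β = (r : WithTop ℝ)) (hs₁ : s₁ ≠ 0)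
    (h2 : ∀ β ∈ s₂, (r : WithTop ℝ) < v β) :
    v ((((s₁ + s₂).map fun β => X - C β).prod).coeff (Multiset.card s₂))
      = Multiset.card s₁ • ((r : WithTop ℝ)) := by
  obtain ⟨t₂, ht₂r, ht₂le⟩ : ∃ t₂ : WithTop ℝ, (r : WithTop ℝ) < t₂ ∧ ∀ β ∈ s₂, t₂ ≤ v β := by
    rcases eq_or_ne s₂ 0 with rfl | h
    · exact ⟨⊤, WithTop.coe_lt_top r, by simp⟩
    · obtain ⟨b, hb, hbmin⟩ := my_exists_min v s₂ h
      exact ⟨v b, h2 b hb, hbmin⟩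
  set k := Multiset.card s₁ with hk
  set n₂ := Multiset.card s₂ with hn₂
  have hk1 : 1 ≤ k := by
    rw [hk, Nat.one_le_iff_ne_zero, Ne, Multiset.card_eq_zero]; exact hs₁
  set P₁ : K[X] := (s₁.map fun β => X - C β).prod with hP₁
  set P₂ : K[X] := (s₂.map fun β => X - C β).prod with hP₂
  have hsplit : ((s₁ + s₂).map fun β => X - C β).prod = P₁ * P₂ := by
    rw [Multiset.map_add, Multiset.prod_add]
  rw [hsplit, coeff_mul]
  have hmem : ((0 : ℕ), n₂) ∈ Finset.HasAntidiagonal.antidiagonal n₂ := by simp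
  rw [← Finset.add_sum_erase _ _ hmem]
  have hP2monic : P₂.Monic := monic_multiset_prod_of_monic _ _ (fun a _ => monic_X_sub_C a)
  have hP2deg : P₂.natDegree = n₂ := natDegree_multiset_prod_X_sub_C_eq_card s₂
  have hmain : v (P₁.coeff 0 * P₂.coeff n₂) = k • ((r : WithTop ℝ)) := by
    rw [← hP2deg, hP2monic.coeff_natDegree, mul_one, coeff_zero_eq_eval_zero, hP₁,
      eval_multiset_prod, Multiset.map_map, my_val_prod, Multiset.map_map]
    have hcong : s₁.map (⇑v ∘ eval 0 ∘ fun β => X - C β) = s₁.map fun _ => (r : WithTop ℝ) := by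
      apply Multiset.map_congr rfl
      intro x hx
      simp only [Function.comp_apply, eval_sub, eval_X, eval_C, zero_sub]
      rw [AddValuation.map_neg]
      exact h1 x hx
    rw [hcong, Multiset.map_const', Multiset.sum_replicate]
  have hrest : ∀ x ∈ (Finset.HasAntidiagonal.antidiagonal n₂).erase (0, n₂),
      (k - 1) • ((r : WithTop ℝ)) + t₂ ≤ v (P₁.coeff x.1 * P₂.coeff x.2) := by
    rintro ⟨i, j⟩ hx
    have hxne : ((i, j) : ℕ × ℕ) ≠ (0, n₂) := Finset.ne_of_mem_erase hx
    have hij : i + j = n₂ := by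
      have := Finset.mem_of_mem_erase hx
      simpa [Finset.mem_antidiagonal] using this
    have hi1 : 1 ≤ i := by
      rcases Nat.eq_zero_or_pos i with rfl | h
      · exact absurd (by simpa using hij) (by simpa using hxne)
      · exact h
    by_cases hik : i ≤ k
    · rw [AddValuation.map_mul]
      have b1 : (k - i) • ((r : WithTop ℝ)) ≤ v (P₁.coeff i) :=
        my_coeff_prod_ge v s₁ _ (fun β hβ => (h1 β hβ).ge) i
      have b2 : i • t₂ ≤ v (P₂.coeff j) := by
        have := my_coeff_prod_ge v s₂ t₂ ht₂le j
        rwa [show Multiset.card s₂ - j = i by omega] at this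
      refine le_trans ?_ (add_le_add b1 b2)
      obtain ⟨i', rfl⟩ : ∃ i', i = i' + 1 := ⟨i - 1, by omega⟩
      calc (k - 1) • ((r : WithTop ℝ)) + t₂
          = (k - (i' + 1)) • ((r : WithTop ℝ)) + i' • ((r : WithTop ℝ)) + t₂ := by
            rw [← add_nsmul]; congr 2; omega
        _ ≤ (k - (i' + 1)) • ((r : WithTop ℝ)) + i' • t₂ + t₂ :=
            add_le_add (add_le_add le_rfl (nsmul_le_nsmul_right ht₂r.le i')) le_rfl
        _ = (k - (i' + 1)) • ((r : WithTop ℝ)) + (i' + 1) • t₂ := by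
            rw [succ_nsmul, add_assoc]
    · have hz : P₁.coeff i = 0 := by
        apply coeff_eq_zero_of_natDegree_lt
        rw [hP₁, natDegree_multiset_prod_X_sub_C_eq_card]
        omega
      rw [hz, zero_mul, AddValuation.map_zero]
      exact le_top
  have hsum := v.map_le_sum hrest
  have hlt : v (P₁.coeff 0 * P₂.coeff n₂)
      < v (∑ x ∈ (Finset.HasAntidiagonal.antidiagonal n₂).erase (0, n₂), P₁.coeff x.1 * P₂.coeff x.2) := by
    refine lt_of_lt_of_le ?_ hsum
    rw [hmain]
    have hkeq : k • ((r : WithTop ℝ)) = (k - 1) • ((r : WithTop ℝ)) + (r : WithTop ℝ) := by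
      rw [← succ_nsmul]; congr 1; omega
    rw [hkeq]
    refine WithTop.add_lt_add_left ?_ ht₂r
    rw [my_nsmul_coe]
    exact WithTop.coe_ne_top
  rw [v.map_add_eq_of_lt_left hlt, hmain]

end helpers2
open Polynomial in
/-- Let `(K,v)` be a valued field of characteristic `0` and residue
characteristic `p` (`v(p) > 0`; the field is taken algebraically closed so that critical
points are available), and let `f(z) = z^d + a_{d-1}z^{d-1} + ⋯ + a₁ z ∈ K[z]` be a monic
postcritically bounded polynomial of prime power degree `d = p^ℓ ≥ 2` fixing `0`. Then
`v(aᵢ) > 0` for all `i < d`; in particular `f` has good reduction and its reduction is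
`z^d`. -/
theorem stmt_10 {K : Type*} [Field K] [IsAlgClosed K] [CharZero K]
    (v : AddValuation K (WithTop ℝ)) (p : ℕ) (hp : p.Prime)
    (hvp : 0 < v ((p : K)))
    (f : Polynomial K) (hf : f.Monic) (ℓ d : ℕ) (hℓ : 1 ≤ ℓ) (hd : d = p ^ ℓ)
    (hdeg : f.natDegree = d) (h0 : f.coeff 0 = 0)
    (hpcb : ∃ B : ℝ, ∀ γ ∈ f.derivative.roots, ∀ n : ℕ,
      (B : WithTop ℝ) ≤ v ((fun t => f.eval t)^[n] γ)) :
    ∀ i : ℕ, i < d → 0 < v (f.coeff i) := by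
  classical
  have hd2 : 2 ≤ d := by
    rw [hd]
    calc 2 ≤ p := hp.two_le
      _ = p ^ 1 := (pow_one p).symm
      _ ≤ p ^ ℓ := Nat.pow_le_pow_right hp.pos hℓ
  have hf0 : f ≠ 0 := hf.ne_zero
  have hsplits : Splits f := IsAlgClosed.splits f
  have hcard : Multiset.card f.roots = d := (splits_iff_card_roots.mp hsplits).trans hdeg
  have hfeq : f = (f.roots.map fun a => X - C a).prod :=
    hsplits.eq_prod_roots_of_monic hf
  set s : Multiset K := f.roots with hs
  have hs0 : s ≠ 0 := by
    rw [← Multiset.card_pos, hcard]; omega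
  obtain ⟨β₀, hβ₀, hmin⟩ := my_exists_min v s hs0
  intro i hi
  by_cases ht : 0 < v β₀
  · -- easy case : all roots have positive valuation
    have hL1 := my_coeff_prod_ge v s (v β₀) hmin i
    rw [← hfeq, hcard] at hL1
    refine lt_of_lt_of_le ?_ hL1
    exact nsmul_pos ht (by omega)
  exfalso
  push_neg at ht
  -- t = v β₀ ≤ 0 : get a real value r
  obtain ⟨r, hr⟩ : ∃ r : ℝ, v β₀ = (r : WithTop ℝ) := by
    cases hx : v β₀ with
    | top => rw [hx, top_le_iff] at ht; exact absurd ht (by simp)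
    | coe r => exact ⟨r, rfl⟩
  have hr0 : r ≤ 0 := by
    rw [hr] at ht
    exact_mod_cast ht
  -- split roots
  set s₁ : Multiset K := s.filter (fun β => v β = (r : WithTop ℝ)) with hs₁def
  set s₂ : Multiset K := s.filter (fun β => ¬ v β = (r : WithTop ℝ)) with hs₂def
  have hs12 : s₁ + s₂ = s := Multiset.filter_add_not _ s
  have h1 : ∀ β ∈ s₁, v β = (r : WithTop ℝ) := fun β hβ => (Multiset.mem_filter.1 hβ).2
  have h2 : ∀ β ∈ s₂, (r : WithTop ℝ) < v β := by
    intro β hβ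
    obtain ⟨hβs, hβne⟩ := Multiset.mem_filter.1 hβ
    exact lt_of_le_of_ne (hr ▸ hmin β hβs) (Ne.symm hβne)
  have hβ₀s₁ : β₀ ∈ s₁ := Multiset.mem_filter.2 ⟨hβ₀, hr⟩
  have hs₁0 : s₁ ≠ 0 := fun h => by simp [h] at hβ₀s₁
  have h0s : (0 : K) ∈ s := by
    rw [hs, mem_roots hf0]
    rw [IsRoot, ← coeff_zero_eq_eval_zero]
    exact h0
  have h0s₂ : (0 : K) ∈ s₂ := by
    refine Multiset.mem_filter.2 ⟨h0s, ?_⟩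
    rw [AddValuation.map_zero]
    exact fun h => WithTop.coe_ne_top h.symm
  set k := Multiset.card s₁ with hkdef
  set n₂ := Multiset.card s₂ with hn₂def
  have hk1 : 1 ≤ k := by
    rw [hkdef, Nat.one_le_iff_ne_zero, Ne, Multiset.card_eq_zero]; exact hs₁0
  have hn₂1 : 1 ≤ n₂ := by
    rw [hn₂def, Nat.one_le_iff_ne_zero, Ne, Multiset.card_eq_zero]
    exact fun h => by simp [h] at h0s₂
  have hkn : k + n₂ = d := by
    rw [hkdef, hn₂def, ← Multiset.card_add, hs12, hcard]
  -- key coefficient value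
  have hA : v (f.coeff n₂) = k • ((r : WithTop ℝ)) := by
    have := my_L2 v s₁ s₂ r h1 hs₁0 h2
    rwa [hs12, ← hfeq] at this
  -- derivative facts
  set f' := f.derivative with hf'def
  have hdK : ((d : K)) ≠ 0 := Nat.cast_ne_zero.2 (by omega)
  have hcast1 : ((d - 1 : ℕ) : K) + 1 = (d : K) := by
    push_cast [Nat.cast_sub (by omega : 1 ≤ d)]
    ring
  have hcoeffd : f.coeff d = 1 := by rw [← hdeg]; exact hf.coeff_natDegree
  have hcoefftop : f'.coeff (d - 1) = (d : K) := by
    rw [hf'def, coeff_derivative, show d - 1 + 1 = d by omega, hcoeffd, one_mul, hcast1]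
  have hdeg' : f'.natDegree = d - 1 := by
    refine le_antisymm (by rw [hf'def]; exact (natDegree_derivative_le f).trans (by omega)) ?_
    exact le_natDegree_of_ne_zero (by rw [hcoefftop]; exact hdK)
  have hf'0 : f' ≠ 0 := fun h => by
    rw [h] at hcoefftop; exact hdK (by simpa using hcoefftop.symm)
  have hlead : f'.leadingCoeff = (d : K) := by
    rw [leadingCoeff, hdeg', hcoefftop]
  have hsplits' : Splits f' := IsAlgClosed.splits f'
  have hcard' : Multiset.card f'.roots = d - 1 := (splits_iff_card_roots.mp hsplits').trans hdeg'
  have hfeq' : C ((d : K)) * (f'.roots.map fun a => X - C a).prod = f' := by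
    rw [← hlead]
    exact C_leadingCoeff_mul_prod_multiset_X_sub_C (hcard'.trans hdeg'.symm)
  set s' : Multiset K := f'.roots with hs'
  have hs'0 : s' ≠ 0 := by
    rw [← Multiset.card_pos, hcard']; omega
  obtain ⟨γ₀, hγ₀, hminγ⟩ := my_exists_min v s' hs'0
  -- upper bound for k • v γ₀
  have hvdtop : v ((p : K)) ≠ ⊤ := v.ne_top_iff.2 (Nat.cast_ne_zero.2 hp.pos.ne')
  have hvd : v ((d : K)) = ℓ • v ((p : K)) := by
    rw [hd]; push_cast; rw [AddValuation.map_pow]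
  have hvdne : v ((d : K)) ≠ ⊤ := v.ne_top_iff.2 hdK
  have hn₂lt : v ((n₂ : K)) < v ((d : K)) := by
    rw [hvd]
    exact my_vnat_lt v hp hvp hvdtop (by omega) (by rw [← hd]; omega)
  -- coefficient of f' at n₂ - 1, two ways
  have hcast2 : ((n₂ - 1 : ℕ) : K) + 1 = (n₂ : K) := by
    push_cast [Nat.cast_sub (by omega : 1 ≤ n₂)]
    ring
  have hw1 : v (f'.coeff (n₂ - 1)) = ((k : ℝ) * r : ℝ) + v ((n₂ : K)) := by
    rw [hf'def, coeff_derivative, show n₂ - 1 + 1 = n₂ by omega, hcast2, AddValuation.map_mul, hA,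
      my_nsmul_coe]
  have hw2 : v ((d : K)) + k • v γ₀ ≤ v (f'.coeff (n₂ - 1)) := by
    conv_rhs => rw [← hfeq']
    rw [coeff_C_mul, AddValuation.map_mul]
    refine add_le_add le_rfl ?_
    have := my_coeff_prod_ge v s' (v γ₀) hminγ (n₂ - 1)
    rwa [hcard', show d - 1 - (n₂ - 1) = k by omega] at this
  have hklt : k • v γ₀ < k • ((r : WithTop ℝ)) := by
    have hstep : v ((d : K)) + k • v γ₀ < v ((d : K)) + k • ((r : WithTop ℝ)) := by
      calc v ((d : K)) + k • v γ₀ ≤ v (f'.coeff (n₂ - 1)) := hw2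
        _ = ((k : ℝ) * r : ℝ) + v ((n₂ : K)) := hw1
        _ < ((k : ℝ) * r : ℝ) + v ((d : K)) := WithTop.add_lt_add_left WithTop.coe_ne_top hn₂lt
        _ = v ((d : K)) + k • ((r : WithTop ℝ)) := by rw [my_nsmul_coe, add_comm]
    exact (WithTop.add_lt_add_iff_left hvdne).1 hstep
  have hγlt : v γ₀ < (r : WithTop ℝ) := by
    by_contra h
    push_neg at h
    exact absurd (nsmul_le_nsmul_right h k) (not_le.2 hklt)
  obtain ⟨c, hc⟩ : ∃ c : ℝ, v γ₀ = (c : WithTop ℝ) := by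
    cases hx : v γ₀ with
    | top => rw [hx] at hγlt; exact absurd hγlt (by simp)
    | coe c => exact ⟨c, rfl⟩
  have hcr : c < r := by rw [hc] at hγlt; exact_mod_cast hγlt
  have hc0 : c < 0 := lt_of_lt_of_le hcr hr0
  -- escape
  have hesc : ∀ n : ℕ, v ((fun t => f.eval t)^[n] γ₀) = (((d : ℝ) ^ n * c : ℝ) : WithTop ℝ) := by
    intro n
    induction n with
    | zero => simpa using hc
    | succ n ih =>
      rw [Function.iterate_succ_apply']
      set z := (fun t => f.eval t)^[n] γ₀ with hz
      have hvz : v z = (((d : ℝ) ^ n * c : ℝ) : WithTop ℝ) := ih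
      have hle : (d : ℝ) ^ n * c ≤ c := by
        have h1 : (1 : ℝ) ≤ (d : ℝ) ^ n := one_le_pow₀ (by exact_mod_cast (by omega : 1 ≤ d))
        nlinarith
      have hkey : ∀ β ∈ s, v z < v β := by
        intro β hβ
        calc v z = (((d : ℝ) ^ n * c : ℝ) : WithTop ℝ) := hvz
          _ < (r : WithTop ℝ) := by exact_mod_cast lt_of_le_of_lt hle hcr
          _ ≤ v β := hr ▸ hmin β hβ
      have hfz : f.eval z = ((s.map fun β => z - β)).prod := by
        conv_lhs => rw [hfeq]
        rw [eval_multiset_prod, Multiset.map_map]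
        congr 1
        apply Multiset.map_congr rfl
        intro x _
        simp
      rw [hfz, my_val_prod, Multiset.map_map]
      have hcong : s.map (⇑v ∘ fun β => z - β) = s.map fun _ => (((d : ℝ) ^ n * c : ℝ) : WithTop ℝ) := by
        apply Multiset.map_congr rfl
        intro x hx
        simp only [Function.comp_apply]
        rw [v.map_sub_eq_of_lt_left (hkey x hx), hvz]
      rw [hcong, Multiset.map_const', Multiset.sum_replicate, hcard, my_nsmul_coe]
      congr 1
      push_cast
      ring
  obtain ⟨B, hB⟩ := hpcb
  obtain ⟨n, hn⟩ : ∃ n : ℕ, B / c < (d : ℝ) ^ n :=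
    pow_unbounded_of_one_lt _ (by exact_mod_cast (by omega : 1 < d))
  have hlt : (d : ℝ) ^ n * c < B := by
    have := mul_lt_mul_of_neg_right hn hc0
    rwa [div_mul_cancel₀ B hc0.ne] at this
  have := hB γ₀ hγ₀ n
  rw [hesc n] at this
  exact absurd (by exact_mod_cast this : B ≤ (d : ℝ) ^ n * c) (not_le.2 hlt)
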